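/- arXiv:1412.8431 — 3 statements merged into one kernel-verified Lean document; each statement's English description precedes it below -/
import Mathlib

section
/- For every integer n, the two-sided circle action on SU(3) defining the Eschenburg space W^7_n is free: if u is a complex number with |u| = 1 and there exists A in SU(3) such that diag(u^{2n}, u^{2n}, u^2) · A · diag(u^{-(1+2n)}, u^{-(1+2n)}, 1) = A, then u = 1. -/
/-- Freeness of the two-sided circle action on `SU(3)` defining the Eschenburg space `W⁷_n`:
if `|u| = 1` and `diag(u^{2n}, u^{2n}, u²) · A · diag(u^{-(1+2n)}, u^{-(1+2n)}, 1) = A` for some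
`A ∈ SU(3)`, then `u = 1`. -/
theorem eschenburg_action_free (n : ℤ) (u : ℂ) (hu : ‖u‖ = 1)
    (h : ∃ A ∈ Matrix.specialUnitaryGroup (Fin 3) ℂ,
      Matrix.diagonal ![u ^ (2 * n), u ^ (2 * n), u ^ (2 : ℤ)] * A *
        Matrix.diagonal ![u ^ (-(1 + 2 * n)), u ^ (-(1 + 2 * n)), 1] = A) :
    u = 1 := by
  obtain ⟨A, hA, hEq⟩ := h
  have hu0 : u ≠ 0 := by
    intro h0; rw [h0] at hu; simp at hu
  by_contra hne
  have hdet : A.det = 1 := (Matrix.mem_specialUnitaryGroup_iff.mp hA).2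
  have hc : u ^ (2 * n) * u ^ (-(2 * n) + -1) = u⁻¹ := by
    rw [← zpow_add₀ hu0]
    norm_num
  have hinv : u⁻¹ ≠ 1 := fun hh => hne (inv_eq_one.mp hh)
  have hzero : ∀ a : ℂ, u ^ (2 * n) * a * u ^ (-(2 * n) + -1) = a → a = 0 := by
    intro a ha
    have h2 : u⁻¹ * a = a := by
      rw [← hc]; linear_combination ha
    have h3 : (u⁻¹ - 1) * a = 0 := by linear_combination h2
    rcases mul_eq_zero.mp h3 with h4 | h4
    · exact absurd (by linear_combination h4) hinv
    · exact h4
  have key : ∀ i j, (Matrix.diagonal ![u ^ (2 * n), u ^ (2 * n), u ^ (2 : ℤ)] * A *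
      Matrix.diagonal ![u ^ (-(1 + 2 * n)), u ^ (-(1 + 2 * n)), 1]) i j = A i j :=
    fun i j => by rw [hEq]
  have h00 := key 0 0
  have h01 := key 0 1
  have h10 := key 1 0
  have h11 := key 1 1
  simp [Matrix.mul_diagonal, Matrix.diagonal_mul] at h00 h01 h10 h11
  have z00 := hzero _ h00
  have z01 := hzero _ h01
  have z10 := hzero _ h10
  have z11 := hzero _ h11
  rw [Matrix.det_fin_three] at hdet
  rw [z00, z01, z10, z11] at hdet
  simp at hdet
end

section
/- The quotient space SU(3)/SU(2) is homeomorphic to the 5-sphere: the third-column map π̃ : SU(3) → S⁵ descends to a homeomorphism from the orbit space of the right multiplication action of the embedded SU(2) on SU(3) onto the unit sphere S⁵ of ℂ³. -/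
/-- The embedding `ι : SU(2) → SU(3)`, `A ↦ diag(A, 1)`. -/
def iota (C : Matrix (Fin 2) (Fin 2) ℂ) : Matrix (Fin 3) (Fin 3) ℂ :=
  !![C 0 0, C 0 1, 0;
     C 1 0, C 1 1, 0;
     0,     0,     1]

/-- The orbit relation of the right multiplication action of the embedded `SU(2)` on `SU(3)`. -/
def su2Rel (A B : Matrix.specialUnitaryGroup (Fin 3) ℂ) : Prop :=
  ∃ C ∈ Matrix.specialUnitaryGroup (Fin 2) ℂ, (B : Matrix (Fin 3) (Fin 3) ℂ) = A * iota C

open Matrix in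
lemma mul_iota_col2 (M : Matrix (Fin 3) (Fin 3) ℂ) (C : Matrix (Fin 2) (Fin 2) ℂ) (i : Fin 3) :
    (M * iota C) i 2 = M i 2 := by
  simp [iota, Matrix.mul_apply, Fin.sum_univ_three]

open Matrix in
/-- The squared norm of the third column of a matrix in `SU(3)` sums to 1. -/
lemma col2_norm_sum (A : Matrix (Fin 3) (Fin 3) ℂ)
    (hA : A ∈ Matrix.specialUnitaryGroup (Fin 3) ℂ) :
    ∑ k : Fin 3, ‖A k 2‖ ^ 2 = 1 := by
  have hu : star A * A = 1 := (Matrix.mem_unitaryGroup_iff').mp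
    ((Matrix.mem_specialUnitaryGroup_iff.mp hA).1)
  have h22 := congrFun (congrFun hu 2) 2
  simp only [Matrix.mul_apply, Matrix.one_apply, Matrix.conjTranspose_apply,
    Matrix.star_apply, if_pos rfl] at h22
  have h22' : ∑ k : Fin 3, (Complex.normSq (A k 2) : ℂ) = 1 := by
    simpa [Complex.normSq_eq_conj_mul_self] using h22
  have hr : ∑ k : Fin 3, Complex.normSq (A k 2) = 1 := by exact_mod_cast h22'
  calc ∑ k : Fin 3, ‖A k 2‖ ^ 2 = ∑ k : Fin 3, Complex.normSq (A k 2) := by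
        refine Finset.sum_congr rfl fun k _ => ?_
        rw [Complex.sq_norm]
    _ = 1 := hr

/-- Surjectivity: every unit vector is the third column of some `SU(3)` matrix. -/
lemma exists_su3_col (v : EuclideanSpace ℂ (Fin 3)) (hv : ‖v‖ = 1) :
    ∃ A ∈ Matrix.specialUnitaryGroup (Fin 3) ℂ, ∀ i, A i 2 = v i := by
  classical
  have card : Module.finrank ℂ (EuclideanSpace ℂ (Fin 3)) = Fintype.card (Fin 3) := by simp
  have horth : Orthonormal ℂ (({2} : Set (Fin 3)).restrict (fun _ : Fin 3 => v)) := by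
    constructor
    · intro i; exact hv
    · intro i j hij
      exact absurd (Subtype.ext ((i.2 : i.1 = 2).trans (j.2 : j.1 = 2).symm)) hij
  obtain ⟨b, hb⟩ := Orthonormal.exists_orthonormalBasis_extension_of_card_eq card horth
  have hb2 : b 2 = v := hb 2 rfl
  -- matrix whose columns are the basis vectors
  set N : Matrix (Fin 3) (Fin 3) ℂ := Matrix.of (fun i j => b j i) with hN_def
  have hNu : star N * N = 1 := by
    ext i j
    have hij := (orthonormal_iff_ite.mp b.orthonormal) i j
    rw [PiLp.inner_apply] at hij
    simp only [RCLike.inner_apply, starRingEnd_apply] at hij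
    simp only [Matrix.mul_apply, Matrix.one_apply, Matrix.conjTranspose_apply,
      Matrix.star_apply, hN_def, Matrix.of_apply]
    rw [← hij]; exact Finset.sum_congr rfl fun _ _ => mul_comm _ _
  have hNdet : star N.det * N.det = 1 := by
    have h := congrArg Matrix.det hNu
    rwa [Matrix.det_mul, Matrix.det_one, Matrix.star_eq_conjTranspose,
      Matrix.det_conjTranspose] at h
  set D : Matrix (Fin 3) (Fin 3) ℂ :=
    Matrix.diagonal (fun j : Fin 3 => if j = 0 then star N.det else 1) with hD_def
  have hDu : star D * D = 1 := by
    ext j k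
    rw [hD_def, Matrix.star_eq_conjTranspose, Matrix.diagonal_conjTranspose,
      Matrix.diagonal_mul_diagonal]
    rcases eq_or_ne j k with rfl | hjk
    · rw [Matrix.diagonal_apply_eq, Matrix.one_apply_eq, Pi.star_apply]
      by_cases hj : j = 0
      · rw [if_pos hj, star_star, mul_comm]; exact hNdet
      · rw [if_neg hj, star_one, one_mul]
    · rw [Matrix.diagonal_apply_ne _ hjk, Matrix.one_apply_ne hjk]
  set A : Matrix (Fin 3) (Fin 3) ℂ := N * D with hA_def
  refine ⟨A, ?_, ?_⟩
  · rw [Matrix.mem_specialUnitaryGroup_iff]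
    constructor
    · rw [Matrix.mem_unitaryGroup_iff']
      calc star (N * D) * (N * D) = star D * (star N * (N * D)) := by
            rw [StarMul.star_mul, Matrix.mul_assoc]
        _ = star D * D := by rw [← Matrix.mul_assoc (star N) N D, hNu, Matrix.one_mul]
        _ = 1 := hDu
    · rw [hA_def, Matrix.det_mul, hD_def, Matrix.det_diagonal, Fin.prod_univ_three,
        if_pos rfl, if_neg (by decide : ¬ (1 : Fin 3) = 0),
        if_neg (by decide : ¬ (2 : Fin 3) = 0), mul_one, mul_one, mul_comm]
      exact hNdet
  · intro i
    rw [hA_def, Matrix.mul_apply, Fin.sum_univ_three, hD_def,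
      Matrix.diagonal_apply_ne _ (by decide : (0 : Fin 3) ≠ 2),
      Matrix.diagonal_apply_ne _ (by decide : (1 : Fin 3) ≠ 2),
      Matrix.diagonal_apply_eq]
    show N i 0 * 0 + N i 1 * 0 + N i 2 * (if (2 : Fin 3) = 0 then star N.det else 1) = v i
    rw [if_neg (by decide : ¬ (2 : Fin 3) = 0), mul_zero, mul_zero, zero_add, zero_add, mul_one]
    show b 2 i = v i
    rw [hb2]

/-- Injectivity: same third column implies related. -/
lemma rel_of_col_eq (A B : Matrix.specialUnitaryGroup (Fin 3) ℂ)
    (h : ∀ i, (A : Matrix (Fin 3) (Fin 3) ℂ) i 2 = (B : Matrix (Fin 3) (Fin 3) ℂ) i 2) :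
    su2Rel A B := by
  classical
  set Am : Matrix (Fin 3) (Fin 3) ℂ := (A : Matrix (Fin 3) (Fin 3) ℂ) with hAm
  set Bm : Matrix (Fin 3) (Fin 3) ℂ := (B : Matrix (Fin 3) (Fin 3) ℂ) with hBm
  obtain ⟨hAu, hAd⟩ := Matrix.mem_specialUnitaryGroup_iff.mp A.2
  obtain ⟨hBu, hBd⟩ := Matrix.mem_specialUnitaryGroup_iff.mp B.2
  have hA1 : star Am * Am = 1 := Matrix.mem_unitaryGroup_iff'.mp hAu
  have hA2 : Am * star Am = 1 := Matrix.mem_unitaryGroup_iff.mp hAu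
  have hB1 : star Bm * Bm = 1 := Matrix.mem_unitaryGroup_iff'.mp hBu
  have hB2 : Bm * star Bm = 1 := Matrix.mem_unitaryGroup_iff.mp hBu
  set M : Matrix (Fin 3) (Fin 3) ℂ := star Am * Bm with hM_def
  have hM1 : star M * M = 1 := by
    rw [hM_def, StarMul.star_mul, star_star, Matrix.mul_assoc,
      ← Matrix.mul_assoc Am (star Am) Bm, hA2, Matrix.one_mul, hB1]
  have hM2 : M * star M = 1 := by
    rw [hM_def, StarMul.star_mul, star_star, Matrix.mul_assoc,
      ← Matrix.mul_assoc Bm (star Bm) Am, hB2, Matrix.one_mul, hA1]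
  have hcol : ∀ i, M i 2 = (1 : Matrix (Fin 3) (Fin 3) ℂ) i 2 := by
    intro i
    have e : M i 2 = (star Am * Am) i 2 := by
      simp only [hM_def, Matrix.mul_apply]
      exact Finset.sum_congr rfl fun k _ => by rw [← h k]
    rw [e, hA1]
  have hcol0 : M 0 2 = 0 := (hcol 0).trans (Matrix.one_apply_ne (by decide))
  have hcol1 : M 1 2 = 0 := (hcol 1).trans (Matrix.one_apply_ne (by decide))
  have hcol2 : M 2 2 = 1 := (hcol 2).trans (Matrix.one_apply_eq 2)
  -- row 2 vanishes away from the corner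
  have hr := congrFun (congrFun hM2 2) 2
  simp only [Matrix.mul_apply, Matrix.star_apply, Matrix.conjTranspose_apply,
    Fin.sum_univ_three, Matrix.one_apply_eq] at hr
  rw [hcol2] at hr
  rw [star_one, mul_one, Complex.star_def,
    Complex.mul_conj, Complex.mul_conj] at hr
  have hsum : (Complex.normSq (M 2 0) : ℂ) + (Complex.normSq (M 2 1) : ℂ) = 0 := by
    linear_combination hr
  have hsum' : Complex.normSq (M 2 0) + Complex.normSq (M 2 1) = 0 := by exact_mod_cast hsum
  obtain ⟨hn0, hn1⟩ := (add_eq_zero_iff_of_nonneg (Complex.normSq_nonneg _)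
    (Complex.normSq_nonneg _)).mp hsum'
  have h20 : M 2 0 = 0 := Complex.normSq_eq_zero.mp hn0
  have h21 : M 2 1 = 0 := Complex.normSq_eq_zero.mp hn1
  -- the SU(2) block
  set C : Matrix (Fin 2) (Fin 2) ℂ :=
    Matrix.of (fun i j : Fin 2 => M i.castSucc j.castSucc) with hC_def
  have hMC : M = iota C := by
    ext i j
    fin_cases i <;> fin_cases j
    · rfl
    · rfl
    · simpa [iota] using hcol0
    · rfl
    · rfl
    · simpa [iota] using hcol1
    · simpa [iota] using h20
    · simpa [iota] using h21
    · simpa [iota] using hcol2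
  have hsu : star (iota C) * iota C = 1 := by rw [← hMC]; exact hM1
  have hCu : star C * C = 1 := by
    ext i j
    fin_cases i <;> fin_cases j
    · have e := congrFun (congrFun hsu 0) 0
      simpa [iota, Matrix.mul_apply, Fin.sum_univ_three, Fin.sum_univ_two,
        Matrix.one_apply, Matrix.star_apply, Matrix.conjTranspose_apply] using e
    · have e := congrFun (congrFun hsu 0) 1
      simpa [iota, Matrix.mul_apply, Fin.sum_univ_three, Fin.sum_univ_two,
        Matrix.one_apply, Matrix.star_apply, Matrix.conjTranspose_apply] using e
    · have e := congrFun (congrFun hsu 1) 0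
      simpa [iota, Matrix.mul_apply, Fin.sum_univ_three, Fin.sum_univ_two,
        Matrix.one_apply, Matrix.star_apply, Matrix.conjTranspose_apply] using e
    · have e := congrFun (congrFun hsu 1) 1
      simpa [iota, Matrix.mul_apply, Fin.sum_univ_three, Fin.sum_univ_two,
        Matrix.one_apply, Matrix.star_apply, Matrix.conjTranspose_apply] using e
  have hMdet : M.det = 1 := by
    rw [hM_def, Matrix.det_mul, Matrix.star_eq_conjTranspose, Matrix.det_conjTranspose,
      hAd, hBd, star_one, one_mul]
  have hCdet : C.det = 1 := by
    have hi : (iota C).det = C.det := by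
      simp [iota, Matrix.det_fin_three, Matrix.det_fin_two]
    rw [← hi, ← hMC, hMdet]
  refine ⟨C, Matrix.mem_specialUnitaryGroup_iff.mpr
    ⟨Matrix.mem_unitaryGroup_iff'.mpr hCu, hCdet⟩, ?_⟩
  show Bm = Am * iota C
  rw [← hMC, hM_def, ← Matrix.mul_assoc, hA2, Matrix.one_mul]

lemma isCompact_su3 :
    IsCompact ((Matrix.specialUnitaryGroup (Fin 3) ℂ : Submonoid _) : Set (Matrix (Fin 3) (Fin 3) ℂ)) := by
  haveI : T2Space (Matrix (Fin 3) (Fin 3) ℂ) :=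
    inferInstanceAs (T2Space (Fin 3 → Fin 3 → ℂ))
  -- the big compact box
  have hT : IsCompact (Set.pi Set.univ
      (fun _ : Fin 3 => Set.pi Set.univ (fun _ : Fin 3 => Metric.closedBall (0 : ℂ) 1))) :=
    isCompact_univ_pi fun _ => isCompact_univ_pi fun _ => isCompact_closedBall _ _
  have hof : Continuous (Matrix.of : (Fin 3 → Fin 3 → ℂ) → Matrix (Fin 3) (Fin 3) ℂ) :=
    continuous_matrix fun i j => (continuous_apply j).comp (continuous_apply i)
  have hK : IsCompact (Matrix.of '' (Set.pi Set.univ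
      (fun _ : Fin 3 => Set.pi Set.univ (fun _ : Fin 3 => Metric.closedBall (0 : ℂ) 1)))) :=
    hT.image hof
  refine hK.of_isClosed_subset ?_ ?_
  · -- closedness
    have h1 : IsClosed {M : Matrix (Fin 3) (Fin 3) ℂ | star M * M = 1} :=
      isClosed_eq ((continuous_id.matrix_conjTranspose).matrix_mul continuous_id)
        continuous_const
    have h2 : IsClosed {M : Matrix (Fin 3) (Fin 3) ℂ | M.det = 1} :=
      isClosed_eq (continuous_id.matrix_det) continuous_const
    have hset : (Matrix.specialUnitaryGroup (Fin 3) ℂ : Set (Matrix (Fin 3) (Fin 3) ℂ))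
        = {M | star M * M = 1} ∩ {M | M.det = 1} := by
      ext M
      simp [Matrix.mem_specialUnitaryGroup_iff, Matrix.mem_unitaryGroup_iff', Set.mem_inter_iff]
    rw [hset]
    exact h1.inter h2
  · intro M hM
    refine ⟨fun i j => M i j, fun i _ j _ => ?_, rfl⟩
    rw [Metric.mem_closedBall, dist_zero_right]
    exact entry_norm_bound_of_unitary (Matrix.mem_specialUnitaryGroup_iff.mp hM).1 i j

instance : CompactSpace (Matrix.specialUnitaryGroup (Fin 3) ℂ) :=
  isCompact_iff_compactSpace.mp isCompact_su3

/-- The quotient `SU(3)/SU(2)` is homeomorphic to the `5`-sphere: the third-column map descends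
to a homeomorphism from the orbit space of the right `SU(2)`-action on `SU(3)` onto the unit
sphere `S⁵` of `ℂ³`. -/
theorem su3_mod_su2_homeomorph_sphere :
    ∃ h : Quot su2Rel ≃ₜ Metric.sphere (0 : EuclideanSpace ℂ (Fin 3)) 1,
      ∀ A : Matrix.specialUnitaryGroup (Fin 3) ℂ, ∀ i : Fin 3,
        ((h (Quot.mk su2Rel A) : EuclideanSpace ℂ (Fin 3)) i)
          = (A : Matrix (Fin 3) (Fin 3) ℂ) i 2 := by
  classical
  -- the third-column map into the sphere
  set g : Matrix.specialUnitaryGroup (Fin 3) ℂ → Metric.sphere (0 : EuclideanSpace ℂ (Fin 3)) 1 :=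
    fun A => ⟨(WithLp.equiv 2 (Fin 3 → ℂ)).symm (fun i => (A : Matrix (Fin 3) (Fin 3) ℂ) i 2),
      by
        rw [mem_sphere_zero_iff_norm, EuclideanSpace.norm_eq]
        have := col2_norm_sum (A : Matrix (Fin 3) (Fin 3) ℂ) A.2
        show √(∑ x, ‖(A : Matrix (Fin 3) (Fin 3) ℂ) x 2‖ ^ 2) = 1
        rw [this, Real.sqrt_one]⟩ with hg_def
  have hg_apply : ∀ A i, ((g A : EuclideanSpace ℂ (Fin 3)) i)
      = (A : Matrix (Fin 3) (Fin 3) ℂ) i 2 := fun A i => rfl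
  have hg_rel : ∀ A B, su2Rel A B → g A = g B := by
    rintro A B ⟨C, hC, hAB⟩
    apply Subtype.ext
    ext i
    show (g A : EuclideanSpace ℂ (Fin 3)) i = (g B : EuclideanSpace ℂ (Fin 3)) i
    rw [hg_apply, hg_apply, hAB, mul_iota_col2]
  have hg_cont : Continuous g := by
    refine Continuous.subtype_mk ?_ _
    exact (PiLp.continuous_toLp 2 (fun _ : Fin 3 => ℂ)).comp
      (continuous_pi fun i => (continuous_subtype_val.matrix_elem i 2 : _))
  have hg_surj : Function.Surjective g := by
    rintro ⟨v, hv⟩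
    rw [mem_sphere_zero_iff_norm] at hv
    obtain ⟨A, hA, hAv⟩ := exists_su3_col v hv
    refine ⟨⟨A, hA⟩, ?_⟩
    apply Subtype.ext
    ext i
    rw [hg_apply]
    exact hAv i
  set f : Quot su2Rel → Metric.sphere (0 : EuclideanSpace ℂ (Fin 3)) 1 :=
    Quot.lift g hg_rel with hf_def
  have hf_bij : Function.Bijective f := by
    constructor
    · intro x y
      induction x using Quot.ind with | _ A =>
      induction y using Quot.ind with | _ B =>
      intro hxy
      refine Quot.sound (rel_of_col_eq A B fun i => ?_)
      have h2 := congrArg (fun z : Metric.sphere (0 : EuclideanSpace ℂ (Fin 3)) 1 =>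
        (z : EuclideanSpace ℂ (Fin 3)) i) hxy
      rw [← hg_apply A i, ← hg_apply B i]
      rw [hf_def] at h2
      exact h2
    · intro y
      obtain ⟨A, hA⟩ := hg_surj y
      exact ⟨Quot.mk _ A, hA⟩
  have hf_cont : Continuous f := continuous_quot_lift hg_rel hg_cont
  let e : Quot su2Rel ≃ Metric.sphere (0 : EuclideanSpace ℂ (Fin 3)) 1 :=
    Equiv.ofBijective f hf_bij
  refine ⟨Continuous.homeoOfEquivCompactToT2 (f := e) hf_cont, fun A i => ?_⟩
  have key : ((f (Quot.mk su2Rel A) : EuclideanSpace ℂ (Fin 3)) i)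
      = (A : Matrix (Fin 3) (Fin 3) ℂ) i 2 := by
    rw [hf_def]; exact hg_apply A i
  exact key
end

section
/- Parametrization of the fiber over the singular locus: let (z₁, z₂) ∈ ℂ² with |z₁|² + |z₂|² = 1. A matrix A ∈ SU(3) has third column (z₁, z₂, 0) if and only if there exist a, b ∈ ℂ with |a|² + |b|² = 1 such that A = C_{a,b}, where C_{a,b} is the product of the matrix with rows (0, z̄₂, z₁), (0, −z̄₁, z₂), (1, 0, 0) and the matrix with rows (a, b, 0), (−b̄, ā, 0), (0, 0, 1). -/
open ComplexConjugate

/-- Parametrization of the fiber of the third-column map over a point `(z₁, z₂, 0)` of the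
singular locus: `A ∈ SU(3)` has third column `(z₁, z₂, 0)` iff `A = C_{a,b}` for some
`a, b ∈ ℂ` with `|a|² + |b|² = 1`. -/
theorem fiber_over_singular_locus (z₁ z₂ : ℂ)
    (hz : ‖z₁‖ ^ 2 + ‖z₂‖ ^ 2 = 1)
    (A : Matrix (Fin 3) (Fin 3) ℂ) (hA : A ∈ Matrix.specialUnitaryGroup (Fin 3) ℂ) :
    (A 0 2 = z₁ ∧ A 1 2 = z₂ ∧ A 2 2 = 0) ↔
      ∃ a b : ℂ, ‖a‖ ^ 2 + ‖b‖ ^ 2 = 1 ∧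
        A = !![0, conj z₂, z₁;
               0, -conj z₁, z₂;
               1, 0, 0] *
            !![a, b, 0;
               -conj b, conj a, 0;
               0, 0, 1] := by
  obtain ⟨hU, hdet⟩ := Matrix.mem_specialUnitaryGroup_iff.mp hA
  rw [Matrix.mem_unitaryGroup_iff] at hU
  constructor
  · rintro ⟨h1, h2, h3⟩
    have hadj : star A = A.adjugate := by
      rw [← Matrix.inv_eq_right_inv hU, Matrix.inv_def, hdet]
      simp
    have key : ∀ i j : Fin 3, A j i = conj (A.adjugate i j) := by
      intro i j
      have := congrFun (congrFun hadj i) j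
      rw [Matrix.star_apply] at this
      rw [← this]
      simp
    have e00 : A 0 0 = -(conj z₂ * conj (A 2 1)) := by
      rw [key 0 0, Matrix.adjugate_fin_three]; simp [h2, h3]
    have e01 : A 0 1 = conj z₂ * conj (A 2 0) := by
      rw [key 1 0, Matrix.adjugate_fin_three]; simp [h2, h3]
    have e10 : A 1 0 = conj z₁ * conj (A 2 1) := by
      rw [key 0 1, Matrix.adjugate_fin_three]; simp [h1, h3]
    have e11 : A 1 1 = -(conj z₁ * conj (A 2 0)) := by
      rw [key 1 1, Matrix.adjugate_fin_three]; simp [h1, h3]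
    have h22 := congrFun (congrFun hU 2) 2
    simp [Matrix.mul_apply, Fin.sum_univ_three, Matrix.one_apply, h3,
      Matrix.star_apply] at h22
    refine ⟨A 2 0, A 2 1, ?_, ?_⟩
    · rw [Complex.sq_norm, Complex.sq_norm]
      have : ((Complex.normSq (A 2 0) : ℂ) + Complex.normSq (A 2 1)) = 1 := by
        rw [← Complex.mul_conj, ← Complex.mul_conj]
        exact h22
      exact_mod_cast this
    · rw [Matrix.eta_fin_three A]
      ext i j
      fin_cases i <;> fin_cases j <;>
        simp [Matrix.mul_apply, Fin.sum_univ_three, e00, e01, e10, e11, h1, h2, h3] <;>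
        ring
  · rintro ⟨a, b, hab, rfl⟩
    refine ⟨?_, ?_, ?_⟩ <;> simp [Matrix.mul_apply, Fin.sum_univ_three]
end
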